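/- Let x and y be unit quaternions (quaternions of norm 1 in ℍ). Then x*y*x⁻¹*y⁻¹ = -1 if and only if re(x) = 0, re(y) = 0, and re(x * star y) = 0. (In SU(2)-language: the commutator of two elements of SU(2) equals -1 if and only if both elements are traceless and they are perpendicular.) -/

import Mathlib

open Quaternion
set_option maxHeartbeats 1000000

/-- The commutator of two unit quaternions (elements of SU(2)) equals `-1` if and only if
both elements are traceless and they are perpendicular, i.e. `re x = 0`, `re y = 0`, and
`re (x * star y) = 0`. -/
theorem commutator_eq_neg_one_iff (x y : ℍ[ℝ]) (hx : ‖x‖ = 1) (hy : ‖y‖ = 1) :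
    x * y * x⁻¹ * y⁻¹ = -1 ↔ x.re = 0 ∧ y.re = 0 ∧ (x * star y).re = 0 := by
  have hnx : Quaternion.normSq x = 1 := by
    have := congrArg (· ^ 2) hx
    simpa [Quaternion.normSq_eq_norm_mul_self, sq] using this
  have hny : Quaternion.normSq y = 1 := by
    have := congrArg (· ^ 2) hy
    simpa [Quaternion.normSq_eq_norm_mul_self, sq] using this
  have hnx' : x.re ^ 2 + x.imI ^ 2 + x.imJ ^ 2 + x.imK ^ 2 = 1 := by
    rw [← Quaternion.normSq_def', hnx]
  have hny' : y.re ^ 2 + y.imI ^ 2 + y.imJ ^ 2 + y.imK ^ 2 = 1 := by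
    rw [← Quaternion.normSq_def', hny]
  have hsx : x * star x = 1 := by rw [Quaternion.self_mul_star, hnx]; simp
  have hsy : y * star y = 1 := by rw [Quaternion.self_mul_star, hny]; simp
  have hsx' : star x * x = 1 := by rw [Quaternion.star_mul_self, hnx]; simp
  have hsy' : star y * y = 1 := by rw [Quaternion.star_mul_self, hny]; simp
  have hxinv : x⁻¹ = star x := inv_eq_of_mul_eq_one_right hsx
  have hyinv : y⁻¹ = star y := inv_eq_of_mul_eq_one_right hsy
  have key : x * y * x⁻¹ * y⁻¹ = -1 ↔ x * y = -(y * x) := by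
    rw [hxinv, hyinv]
    constructor
    · intro h
      have h2 : x * y * star x * star y * (y * x) = -1 * (y * x) := by rw [h]
      simp only [neg_mul, one_mul, mul_assoc] at h2
      rw [← mul_assoc (star y) y x, hsy', one_mul, hsx', mul_one] at h2
      exact h2
    · intro h
      rw [h]
      have : -(y * x) * star x * star y = -(y * (x * star x) * star y) := by
        simp only [neg_mul, mul_assoc]
      rw [this, hsx, mul_one, hsy]
  rw [key]
  simp only [Quaternion.ext_iff, Quaternion.re_mul, Quaternion.imI_mul, Quaternion.imJ_mul,
    Quaternion.imK_mul, Quaternion.re_neg, Quaternion.imI_neg, Quaternion.imJ_neg,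
    Quaternion.imK_neg, Quaternion.re_star, Quaternion.imI_star, Quaternion.imJ_star,
    Quaternion.imK_star]
  constructor
  · rintro ⟨h1, h2, h3, h4⟩
    have k1 : (y.re ^ 2 + y.imI ^ 2 + y.imJ ^ 2 + y.imK ^ 2) * x.re = 0 := by
      linear_combination (y.re / 2) * h1 + (y.imI / 2) * h2 + (y.imJ / 2) * h3 + (y.imK / 2) * h4
    have k2 : (x.re ^ 2 + x.imI ^ 2 + x.imJ ^ 2 + x.imK ^ 2) * y.re = 0 := by
      linear_combination (x.re / 2) * h1 + (x.imI / 2) * h2 + (x.imJ / 2) * h3 + (x.imK / 2) * h4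
    have ha : x.re = 0 := by linear_combination k1 - x.re * hny'
    have he : y.re = 0 := by linear_combination k2 - y.re * hnx'
    refine ⟨ha, he, ?_⟩
    linear_combination (-1 / 2 : ℝ) * h1 + 2 * y.re * ha
  · rintro ⟨ha, he, hp⟩
    refine ⟨?_, ?_, ?_, ?_⟩
    · linear_combination -2 * hp + 4 * y.re * ha
    · linear_combination 2 * y.imI * ha + 2 * x.imI * he
    · linear_combination 2 * y.imJ * ha + 2 * x.imJ * he
    · linear_combination 2 * y.imK * ha + 2 * x.imK * he
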